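/- arXiv:1705.02205 — 2 statements merged into one kernel-verified Lean document; each statement's English description precedes it below -/
import Mathlib

section
/- For all real numbers w_R < w_F, the double integral ∫_{-∞}^{w_F} e^{-z²/2} (∫_{max(z,w_R)}^{w_F} e^{u²/2} du) dz is finite and equals the (finite) single integral ∫_0^∞ (e^{-s²/2}/s)(e^{s·w_F} − e^{s·w_R}) ds. -/
open MeasureTheory Set Real

private theorem gauss_int' : MeasureTheory.Integrable (fun z : ℝ => Real.exp (-z ^ 2 / 2)) := by
  have := integrable_exp_neg_mul_sq (by norm_num : (0:ℝ) < 1/2)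
  convert this using 2 with x
  ring_nf

private theorem gauss_int_shift' (c : ℝ) :
    MeasureTheory.Integrable (fun z : ℝ => Real.exp (-(z - c) ^ 2 / 2)) :=
  gauss_int'.comp_sub_right c

private theorem shift_Ioi' (u : ℝ) (f : ℝ → ℝ) :
    ∫ s in Set.Ioi (0:ℝ), f (s - u) = ∫ t in Set.Ioi (-u), f t := by
  have A : MeasurePreserving (fun x : ℝ => x - u) volume volume :=
    measurePreserving_sub_right volume u
  have B : MeasurableEmbedding (fun x : ℝ => x - u) :=
    (Homeomorph.subRight u).measurableEmbedding
  rw [← A.setIntegral_image_emb B f (Set.Ioi 0)]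
  congr 1
  ext x
  simp [Set.mem_image, sub_eq_iff_eq_add]

private theorem key_comp' (u : ℝ) :
    ∫ s in Set.Ioi (0:ℝ), Real.exp (-s ^ 2 / 2 + s * u) =
      Real.exp (u ^ 2 / 2) * ∫ z in Set.Iio u, Real.exp (-z ^ 2 / 2) := by
  have e1 : ∀ s : ℝ, Real.exp (-s ^ 2 / 2 + s * u)
      = Real.exp (u ^ 2 / 2) * Real.exp (-(s - u) ^ 2 / 2) := by
    intro s; rw [← Real.exp_add]; ring_nf
  calc ∫ s in Set.Ioi (0:ℝ), Real.exp (-s ^ 2 / 2 + s * u)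
      = ∫ s in Set.Ioi (0:ℝ), Real.exp (u ^ 2 / 2) * Real.exp (-(s - u) ^ 2 / 2) := by
        simp_rw [e1]
    _ = Real.exp (u ^ 2 / 2) * ∫ s in Set.Ioi (0:ℝ), Real.exp (-(s - u) ^ 2 / 2) :=
        MeasureTheory.integral_const_mul _ _
    _ = Real.exp (u ^ 2 / 2) * ∫ t in Set.Ioi (-u), Real.exp (-t ^ 2 / 2) := by
        rw [shift_Ioi' u (fun t => Real.exp (-t ^ 2 / 2))]
    _ = Real.exp (u ^ 2 / 2) * ∫ z in Set.Iio u, Real.exp (-z ^ 2 / 2) := by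
        congr 1
        have := integral_comp_neg_Ioi (-u) (fun x => Real.exp (-x ^ 2 / 2))
        simp only [neg_neg, neg_sq] at this
        rw [this, integral_Iic_eq_integral_Iio]

/- STATEMENT 0: For all real numbers w_R < w_F, the double integral
∫_{-∞}^{w_F} e^{-z²/2} (∫_{max(z,w_R)}^{w_F} e^{u²/2} du) dz is finite and equals the
(finite) single integral ∫_0^∞ (e^{-s²/2}/s)(e^{s·w_F} − e^{s·w_R}) ds. -/
theorem double_integral_eq_single_integral (wR wF : ℝ) (h : wR < wF) :
    MeasureTheory.IntegrableOn
      (fun z => Real.exp (-z ^ 2 / 2) * ∫ u in Set.Ioc (max z wR) wF, Real.exp (u ^ 2 / 2))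
      (Set.Iic wF) ∧
    MeasureTheory.IntegrableOn
      (fun s => Real.exp (-s ^ 2 / 2) / s * (Real.exp (s * wF) - Real.exp (s * wR)))
      (Set.Ioi (0 : ℝ)) ∧
    (∫ z in Set.Iic wF,
        Real.exp (-z ^ 2 / 2) * ∫ u in Set.Ioc (max z wR) wF, Real.exp (u ^ 2 / 2)) =
      ∫ s in Set.Ioi (0 : ℝ),
        Real.exp (-s ^ 2 / 2) / s * (Real.exp (s * wF) - Real.exp (s * wR)) := by
  set ν := volume.restrict (Set.Ioc wR wF) with hν
  set μ1 := volume.restrict (Set.Iic wF) with hμ1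
  set μ2 := volume.restrict (Set.Ioi (0:ℝ)) with hμ2
  set f2 : ℝ × ℝ → ℝ := Set.indicator {q : ℝ × ℝ | q.1 < q.2}
    (fun q => Real.exp (-q.1 ^ 2 / 2) * Real.exp (q.2 ^ 2 / 2)) with hf2def
  set f3 : ℝ × ℝ → ℝ := fun p => Real.exp (-p.1 ^ 2 / 2 + p.1 * p.2) with hf3def
  -- integrability of f2
  have hf2 : MeasureTheory.Integrable f2 (μ1.prod ν) := by
    set M : ℝ := max |wR| |wF| with hM
    have hmeas : AEStronglyMeasurable f2 (μ1.prod ν) := by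
      apply AEStronglyMeasurable.indicator
      · exact (Continuous.aestronglyMeasurable (by continuity))
      · exact measurableSet_lt measurable_fst measurable_snd
    have hdom : MeasureTheory.Integrable
        (fun p : ℝ × ℝ => Real.exp (-p.1 ^ 2 / 2) * Real.exp (M ^ 2 / 2)) (μ1.prod ν) :=
      MeasureTheory.Integrable.mul_prod (gauss_int'.restrict)
        (show MeasureTheory.Integrable (fun _ : ℝ => Real.exp (M ^ 2 / 2)) ν from
          integrableOn_const measure_Ioc_lt_top.ne)
    apply hdom.mono hmeas
    rw [hμ1, hν, Measure.prod_restrict]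
    filter_upwards [ae_restrict_mem (measurableSet_Iic.prod measurableSet_Ioc)] with p hp
    have hu : p.2 ∈ Set.Ioc wR wF := hp.2
    have habs : |p.2| ≤ M := by
      rw [abs_le]
      constructor
      · linarith [hu.1, neg_abs_le wR, neg_le_neg (le_max_left |wR| |wF|)]
      · exact le_trans hu.2 (le_trans (le_abs_self wF) (le_max_right _ _))
    have hsq : p.2 ^ 2 ≤ M ^ 2 := sq_le_sq' (by linarith [abs_le.mp habs]) (abs_le.mp habs).2
    calc ‖f2 p‖
        ≤ ‖Real.exp (-p.1 ^ 2 / 2) * Real.exp (p.2 ^ 2 / 2)‖ := norm_indicator_le_norm_self _ _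
      _ ≤ ‖Real.exp (-p.1 ^ 2 / 2) * Real.exp (M ^ 2 / 2)‖ := by
          rw [Real.norm_eq_abs, Real.norm_eq_abs, abs_of_pos (by positivity),
            abs_of_pos (by positivity)]
          exact mul_le_mul_of_nonneg_left (Real.exp_le_exp.mpr (by linarith)) (Real.exp_pos _).le
  -- integrability of f3
  have hf3 : MeasureTheory.Integrable f3 (μ2.prod ν) := by
    have hdomS : MeasureTheory.Integrable (fun s : ℝ => Real.exp (-s ^ 2 / 2 + s * wF)) := by
      have e : ∀ s : ℝ, Real.exp (-s ^ 2 / 2 + s * wF)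
          = Real.exp (wF ^ 2 / 2) * Real.exp (-(s - wF) ^ 2 / 2) := by
        intro s; rw [← Real.exp_add]; ring_nf
      simp_rw [e]
      exact (gauss_int_shift' wF).const_mul _
    have hdom : MeasureTheory.Integrable
        (fun p : ℝ × ℝ => Real.exp (-p.1 ^ 2 / 2 + p.1 * wF) * 1) (μ2.prod ν) :=
      MeasureTheory.Integrable.mul_prod (hdomS.restrict)
        (show MeasureTheory.Integrable (fun _ : ℝ => (1:ℝ)) ν from
          integrableOn_const measure_Ioc_lt_top.ne)
    apply hdom.mono (Continuous.aestronglyMeasurable (by continuity))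
    rw [hμ2, hν, Measure.prod_restrict]
    filter_upwards [ae_restrict_mem (measurableSet_Ioi.prod measurableSet_Ioc)] with p hp
    rw [Real.norm_eq_abs, Real.norm_eq_abs, abs_of_pos (Real.exp_pos _), mul_one,
      abs_of_pos (Real.exp_pos _)]
    apply Real.exp_le_exp.mpr
    have h1 : (0:ℝ) < p.1 := hp.1
    have h2 : p.2 ≤ wF := hp.2.2
    nlinarith
  -- pointwise identity in z
  have hz_eq : ∀ z : ℝ,
      Real.exp (-z ^ 2 / 2) * ∫ u in Set.Ioc (max z wR) wF, Real.exp (u ^ 2 / 2)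
        = ∫ u, f2 (z, u) ∂ν := by
    intro z
    have e : ∀ u : ℝ, f2 (z, u)
        = Set.indicator (Set.Ioi z) (fun u => Real.exp (-z ^ 2 / 2) * Real.exp (u ^ 2 / 2)) u := by
      intro u
      by_cases hzu : z < u <;> simp [hf2def, Set.indicator, hzu]
    simp_rw [e, hν]
    rw [setIntegral_indicator measurableSet_Ioi]
    have hset : Set.Ioc wR wF ∩ Set.Ioi z = Set.Ioc (max z wR) wF := by
      ext u; simp only [Set.mem_inter_iff, Set.mem_Ioc, Set.mem_Ioi, max_lt_iff]; tauto
    rw [hset, MeasureTheory.integral_const_mul]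
  -- pointwise identity in u
  have hu_eq : ∀ u ∈ Set.Ioc wR wF,
      (∫ z, f2 (z, u) ∂μ1) = (∫ z in Set.Iio u, Real.exp (-z ^ 2 / 2)) * Real.exp (u ^ 2 / 2) := by
    intro u hu
    have e : ∀ z : ℝ, f2 (z, u)
        = Set.indicator (Set.Iio u) (fun z => Real.exp (-z ^ 2 / 2) * Real.exp (u ^ 2 / 2)) z := by
      intro z
      by_cases hzu : z < u <;> simp [hf2def, Set.indicator, hzu]
    simp_rw [e, hμ1]
    rw [setIntegral_indicator measurableSet_Iio]
    have hset : Set.Iic wF ∩ Set.Iio u = Set.Iio u :=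
      Set.inter_eq_self_of_subset_right (fun z hz => le_trans (le_of_lt hz) hu.2)
    rw [hset, MeasureTheory.integral_mul_const]
  -- pointwise identity in s
  have hs_eq : ∀ s ∈ Set.Ioi (0:ℝ),
      Real.exp (-s ^ 2 / 2) / s * (Real.exp (s * wF) - Real.exp (s * wR))
        = ∫ u, f3 (s, u) ∂ν := by
    intro s hs
    have hs' : (0:ℝ) < s := hs
    have e : ∀ u : ℝ, f3 (s, u) = Real.exp (-s ^ 2 / 2) * Real.exp (s * u) := by
      intro u; rw [hf3def]; exact Real.exp_add _ _
    simp_rw [e, hν]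
    rw [MeasureTheory.integral_const_mul]
    have h1 : (∫ u in Set.Ioc wR wF, Real.exp (s * u)) = ∫ u in wR..wF, Real.exp (s * u) :=
      (intervalIntegral.integral_of_le h.le).symm
    rw [h1, intervalIntegral.integral_comp_mul_left (fun x => Real.exp x) (ne_of_gt hs'),
      integral_exp]
    field_simp
    rw [smul_eq_mul, ← mul_assoc, mul_one_div_cancel (ne_of_gt hs'), one_mul]
  -- conclusion
  have hpart1 : MeasureTheory.IntegrableOn
      (fun z => Real.exp (-z ^ 2 / 2) * ∫ u in Set.Ioc (max z wR) wF, Real.exp (u ^ 2 / 2))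
      (Set.Iic wF) :=
    hf2.integral_prod_left.congr (MeasureTheory.ae_of_all _ (fun z => (hz_eq z).symm))
  have hpart2 : MeasureTheory.IntegrableOn
      (fun s => Real.exp (-s ^ 2 / 2) / s * (Real.exp (s * wF) - Real.exp (s * wR)))
      (Set.Ioi (0:ℝ)) := by
    apply hf3.integral_prod_left.congr
    rw [hμ2]
    filter_upwards [ae_restrict_mem measurableSet_Ioi] with s hs
    exact (hs_eq s hs).symm
  refine ⟨hpart1, hpart2, ?_⟩
  have swap2 : (∫ z, (∫ u, f2 (z, u) ∂ν) ∂μ1) = ∫ u, (∫ z, f2 (z, u) ∂μ1) ∂ν := by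
    apply MeasureTheory.integral_integral_swap
    exact hf2
  have swap3 : (∫ s, (∫ u, f3 (s, u) ∂ν) ∂μ2) = ∫ u, (∫ s, f3 (s, u) ∂μ2) ∂ν := by
    apply MeasureTheory.integral_integral_swap
    exact hf3
  calc (∫ z in Set.Iic wF,
        Real.exp (-z ^ 2 / 2) * ∫ u in Set.Ioc (max z wR) wF, Real.exp (u ^ 2 / 2))
      = ∫ z, (∫ u, f2 (z, u) ∂ν) ∂μ1 := by
        rw [hμ1]; exact MeasureTheory.integral_congr_ae (MeasureTheory.ae_of_all _ hz_eq)
    _ = ∫ u, (∫ z, f2 (z, u) ∂μ1) ∂ν := swap2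
    _ = ∫ u, (∫ s, f3 (s, u) ∂μ2) ∂ν := by
        apply MeasureTheory.integral_congr_ae
        rw [hν]
        filter_upwards [ae_restrict_mem measurableSet_Ioc] with u hu
        rw [hu_eq u hu]
        have : (∫ s, f3 (s, u) ∂μ2)
            = Real.exp (u ^ 2 / 2) * ∫ z in Set.Iio u, Real.exp (-z ^ 2 / 2) := by
          rw [hμ2, hf3def]; exact key_comp' u
        rw [this, mul_comm]
    _ = ∫ s, (∫ u, f3 (s, u) ∂ν) ∂μ2 := swap3.symm
    _ = ∫ s in Set.Ioi (0:ℝ),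
          Real.exp (-s ^ 2 / 2) / s * (Real.exp (s * wF) - Real.exp (s * wR)) := by
        rw [hμ2]
        apply MeasureTheory.integral_congr_ae
        filter_upwards [ae_restrict_mem measurableSet_Ioi] with s hs
        exact (hs_eq s hs).symm
end

section
/- The function ρ is continuous and nonnegative on (-∞,V_F], strictly positive on (-∞,V_F), and satisfies ρ(V_F)=0; it is differentiable on (-∞,V_R) and on (V_R,V_F) with a·ρ'(v) = (V_0−v)·ρ(v) for v < V_R and a·ρ'(v) = (V_0−v)·ρ(v) − N for V_R < v < V_F; and its left derivative at V_F satisfies N = −a·ρ'(V_F). In other words, ρ is a stationary profile: the flux (V_0−v)ρ(v) − a ρ'(v) equals 0 on (-∞,V_R) and equals N on (V_R,V_F), with absorbing boundary condition at V_F and firing rate N. -/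
/-- The stationary profile
ρ(v) := (N/a) e^{-(v−V_0)²/(2a)} ∫_{max(v,V_R)}^{V_F} e^{(w−V_0)²/(2a)} dw. -/
noncomputable def statProfile (N a V0 VR VF : ℝ) (v : ℝ) : ℝ :=
  N / a * Real.exp (-(v - V0) ^ 2 / (2 * a)) *
    ∫ w in (max v VR)..VF, Real.exp ((w - V0) ^ 2 / (2 * a))

noncomputable def gAux (a V0 w : ℝ) : ℝ := Real.exp ((w - V0) ^ 2 / (2 * a))

noncomputable def GAux (a V0 VR t : ℝ) : ℝ := ∫ w in VR..t, gAux a V0 w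

lemma gAux_cont (a V0 : ℝ) : Continuous (gAux a V0) := by
  unfold gAux; fun_prop

lemma GAux_hasDerivAt (a V0 VR t : ℝ) : HasDerivAt (GAux a V0 VR) (gAux a V0 t) t :=
  intervalIntegral.integral_hasDerivAt_right ((gAux_cont a V0).intervalIntegrable _ _)
    ((gAux_cont a V0).stronglyMeasurable.stronglyMeasurableAtFilter) (gAux_cont a V0).continuousAt

lemma stat_eq (N a V0 VR VF v : ℝ) : statProfile N a V0 VR VF v
    = N / a * Real.exp (-(v - V0) ^ 2 / (2 * a)) *
      (GAux a V0 VR VF - GAux a V0 VR (max v VR)) := by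
  unfold statProfile GAux gAux
  congr 1
  rw [eq_sub_iff_add_eq, add_comm]
  exact intervalIntegral.integral_add_adjacent_intervals
    ((gAux_cont a V0).intervalIntegrable _ _) ((gAux_cont a V0).intervalIntegrable _ _)

lemma expAux_hasDerivAt (a V0 : ℝ) (ha : a ≠ 0) (v : ℝ) :
    HasDerivAt (fun v => Real.exp (-(v - V0) ^ 2 / (2 * a)))
      (Real.exp (-(v - V0) ^ 2 / (2 * a)) * ((V0 - v) / a)) v := by
  have h1 : HasDerivAt (fun v : ℝ => -(v - V0) ^ 2 / (2 * a)) ((V0 - v) / a) v := by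
    have := (((hasDerivAt_id v).sub_const V0).pow 2).neg.div_const (2 * a)
    refine this.congr_deriv ?_
    simp only [id]
    field_simp
    ring
  exact h1.exp

lemma fAux_hasDerivAt (N a V0 VR VF : ℝ) (ha : 0 < a) (v : ℝ) :
    HasDerivAt (fun v => N / a * Real.exp (-(v - V0) ^ 2 / (2 * a)) *
        (GAux a V0 VR VF - GAux a V0 VR v))
      (((V0 - v) * (N / a * Real.exp (-(v - V0) ^ 2 / (2 * a)) *
        (GAux a V0 VR VF - GAux a V0 VR v)) - N) / a) v := by
  have he := (expAux_hasDerivAt a V0 ha.ne' v).const_mul (N / a)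
  have hG := (hasDerivAt_const v (GAux a V0 VR VF)).sub (GAux_hasDerivAt a V0 VR v)
  have h := he.mul hG
  refine h.congr_deriv ?_
  symm
  have h1 : Real.exp (-(v - V0) ^ 2 / (2 * a)) * gAux a V0 v = 1 := by
    unfold gAux
    rw [← Real.exp_add]
    rw [show -(v - V0) ^ 2 / (2 * a) + (v - V0) ^ 2 / (2 * a) = 0 by ring, Real.exp_zero]
  simp only [Pi.sub_apply]
  linear_combination (N / a) * h1

theorem statProfile_properties (VR VF N a V0 : ℝ) (hV : VR < VF) (hN : 0 < N) (ha : 0 < a) :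
    ContinuousOn (statProfile N a V0 VR VF) (Set.Iic VF) ∧
    (∀ v ∈ Set.Iic VF, 0 ≤ statProfile N a V0 VR VF v) ∧
    (∀ v ∈ Set.Iio VF, 0 < statProfile N a V0 VR VF v) ∧
    statProfile N a V0 VR VF VF = 0 ∧
    (∀ v ∈ Set.Iio VR,
      HasDerivAt (statProfile N a V0 VR VF) ((V0 - v) * statProfile N a V0 VR VF v / a) v) ∧
    (∀ v ∈ Set.Ioo VR VF,
      HasDerivAt (statProfile N a V0 VR VF)
        (((V0 - v) * statProfile N a V0 VR VF v - N) / a) v) ∧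
    HasDerivWithinAt (statProfile N a V0 VR VF) (-(N / a)) (Set.Iic VF) VF := by
  have hGc : Continuous (GAux a V0 VR) :=
    continuous_iff_continuousAt.2 fun t => (GAux_hasDerivAt a V0 VR t).continuousAt
  have hcont : Continuous (statProfile N a V0 VR VF) := by
    have heq : statProfile N a V0 VR VF = fun v => N / a *
        Real.exp (-(v - V0) ^ 2 / (2 * a)) *
        (GAux a V0 VR VF - GAux a V0 VR (max v VR)) :=
      funext fun v => stat_eq N a V0 VR VF v
    rw [heq]
    exact (continuous_const.mul (by fun_prop)).mul
      (continuous_const.sub (hGc.comp (continuous_id.max continuous_const)))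
  -- eventual equality on Ioi VR with fAux
  have hfeq : ∀ v ∈ Set.Ioi VR, statProfile N a V0 VR VF v
      = N / a * Real.exp (-(v - V0) ^ 2 / (2 * a)) *
        (GAux a V0 VR VF - GAux a V0 VR v) := by
    intro v hv
    rw [stat_eq, max_eq_left (le_of_lt hv)]
  have hefeq : ∀ v ∈ Set.Ioi VR,
      statProfile N a V0 VR VF =ᶠ[nhds v] fun w => N / a *
        Real.exp (-(w - V0) ^ 2 / (2 * a)) * (GAux a V0 VR VF - GAux a V0 VR w) := by
    intro v hv
    filter_upwards [isOpen_Ioi.mem_nhds hv] with w hw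
    exact hfeq w hw
  refine ⟨hcont.continuousOn, ?_, ?_, ?_, ?_, ?_, ?_⟩
  · intro v hv
    unfold statProfile
    apply mul_nonneg (mul_nonneg (by positivity) (Real.exp_nonneg _))
    apply intervalIntegral.integral_nonneg (max_le hv (le_of_lt hV))
    intro x _; exact Real.exp_nonneg _
  · intro v hv
    unfold statProfile
    apply mul_pos (mul_pos (by positivity) (Real.exp_pos _))
    apply intervalIntegral.intervalIntegral_pos_of_pos_on
      ((gAux_cont a V0).intervalIntegrable _ _)
      (fun x _ => Real.exp_pos _) (max_lt hv hV)
  · unfold statProfile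
    rw [max_eq_left (le_of_lt hV), intervalIntegral.integral_same, mul_zero]
  · intro v hv
    have heq : statProfile N a V0 VR VF =ᶠ[nhds v] fun w =>
        (N / a * (GAux a V0 VR VF - GAux a V0 VR VR)) *
          Real.exp (-(w - V0) ^ 2 / (2 * a)) := by
      filter_upwards [isOpen_Iio.mem_nhds hv] with w hw
      rw [stat_eq, max_eq_right (le_of_lt hw)]
      ring
    have hd := (expAux_hasDerivAt a V0 ha.ne' v).const_mul
      (N / a * (GAux a V0 VR VF - GAux a V0 VR VR))
    have hd' := hd.congr_of_eventuallyEq heq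
    refine hd'.congr_deriv ?_
    symm
    rw [stat_eq, max_eq_right (le_of_lt hv)]
    ring
  · intro v hv
    have hd := fAux_hasDerivAt N a V0 VR VF ha v
    have hd' := hd.congr_of_eventuallyEq (hefeq v hv.1)
    rw [hfeq v hv.1]
    exact hd'
  · have hd := fAux_hasDerivAt N a V0 VR VF ha VF
    have hd' := hd.congr_of_eventuallyEq (hefeq VF hV)
    have h0 : statProfile N a V0 VR VF VF = 0 := by
      unfold statProfile
      rw [max_eq_left (le_of_lt hV), intervalIntegral.integral_same, mul_zero]
    have hval : ((V0 - VF) * (N / a * Real.exp (-(VF - V0) ^ 2 / (2 * a)) *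
        (GAux a V0 VR VF - GAux a V0 VR VF)) - N) / a = -(N / a) := by
      rw [sub_self, mul_zero, mul_zero, zero_sub]
      ring
    rw [hval] at hd'
    exact hd'.hasDerivWithinAt
end
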